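/- arXiv:2303.10786 — 2 statements merged into one kernel-verified Lean document; each statement's English description precedes it below -/
import Mathlib

section
/- Let W be a Lagrangian of V. Then W contains a perfect cube if and only if all elements of W have a common root, i.e. there exists [a:b] ∈ ℂℙ¹ such that the linear form bX − aY divides every element of W. -/
noncomputable section

open MvPolynomial

/-- The polynomial ring `ℂ[X,Y]`. -/
abbrev P2 : Type := MvPolynomial (Fin 2) ℂ

/-- The variable `X`. -/
def Xv : P2 := X 0

/-- The variable `Y`. -/
def Yv : P2 := X 1

/-- `V`: the space of homogeneous cubic polynomials in `X, Y`. -/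
def Vcubic : Submodule ℂ P2 := homogeneousSubmodule (Fin 2) ℂ 3

/-- The coefficient of `X^i Y^j`. -/
def cf (i j : ℕ) (p : P2) : ℂ := coeff (Finsupp.single 0 i + Finsupp.single 1 j) p

/-- The alternating bilinear form `ω` with `ω(X³,Y³) = 1`, `ω(X²Y,XY²) = -1/3`,
all other pairings of distinct basis vectors being `0`. -/
def omegaForm (p q : P2) : ℂ :=
  cf 3 0 p * cf 0 3 q - cf 0 3 p * cf 3 0 q
    - (1 / 3) * (cf 2 1 p * cf 1 2 q - cf 1 2 p * cf 2 1 q)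

/-- The linear form `b X - a Y` associated to the point `[a : b] ∈ ℂℙ¹`. -/
def lf (a b : ℂ) : P2 := C b * Xv - C a * Yv

/-- A Lagrangian of `V`: a 2-dimensional subspace contained in `V` on which `ω` vanishes. -/
def IsLagrangian (W : Submodule ℂ P2) : Prop :=
  W ≤ Vcubic ∧ Module.finrank ℂ W = 2 ∧ ∀ p ∈ W, ∀ q ∈ W, omegaForm p q = 0

/-- A perfect cube: a nonzero element of the form `c • (bX - aY)³`. -/
def IsPerfectCube (p : P2) : Prop :=
  ∃ c a b : ℂ, c ≠ 0 ∧ (a ≠ 0 ∨ b ≠ 0) ∧ p = C c * lf a b ^ 3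

/-- The action of `SL(2,ℂ)` on `ℂ[X,Y]` by linear substitution of the variables. -/
def subst (g : Matrix.SpecialLinearGroup (Fin 2) ℂ) : P2 →ₐ[ℂ] P2 :=
  aeval (fun i => C (g.1 i 0) * Xv + C (g.1 i 1) * Yv)

/-- The induced action of `SL(2,ℂ)` on subspaces of `ℂ[X,Y]`. -/
def mapAct (g : Matrix.SpecialLinearGroup (Fin 2) ℂ) (W : Submodule ℂ P2) :
    Submodule ℂ P2 :=
  W.map (subst g).toLinearMap

/-- The `SL(2,ℂ)`-orbit of a subspace. -/
def slOrbit (W₀ : Submodule ℂ P2) : Set (Submodule ℂ P2) := {W | ∃ g, W = mapAct g W₀}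

/-! ### Auxiliary machinery -/

/-- Canonical representation of a cubic by its four coefficients. -/
def rep (c3 c2 c1 c0 : ℂ) : P2 :=
  C c3 * (Xv^3 * Yv^0) + C c2 * (Xv^2 * Yv^1) + C c1 * (Xv^1 * Yv^2) + C c0 * (Xv^0 * Yv^3)

/-- A quadratic with coefficients `u, v, w`. -/
def quad (u v w : ℂ) : P2 := C u * (Xv^2 * Yv^0) + C v * (Xv^1 * Yv^1) + C w * (Xv^0 * Yv^2)

lemma fs_eq (i j k l : ℕ) :
    (Finsupp.single (0 : Fin 2) k + Finsupp.single 1 l =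
      Finsupp.single 0 i + Finsupp.single 1 j) ↔ (k = i ∧ l = j) := by
  constructor
  · intro h
    have h0 := DFunLike.congr_fun h 0
    have h1 := DFunLike.congr_fun h 1
    simp [Finsupp.single_apply] at h0 h1
    exact ⟨h0, h1⟩
  · rintro ⟨rfl, rfl⟩; rfl

lemma XY_pow (k l : ℕ) :
    Xv ^ k * Yv ^ l = monomial (Finsupp.single 0 k + Finsupp.single 1 l) 1 := by
  simp [Xv, Yv, X_pow_eq_monomial, monomial_mul]

lemma cf_XY (i j k l : ℕ) : cf i j (Xv ^ k * Yv ^ l) = if k = i ∧ l = j then 1 else 0 := by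
  rw [XY_pow, cf, coeff_monomial]
  simp only [fs_eq]

lemma cf_add (i j : ℕ) (p q : P2) : cf i j (p + q) = cf i j p + cf i j q := coeff_add _ _ _
lemma cf_C_mul (i j : ℕ) (c : ℂ) (p : P2) : cf i j (C c * p) = c * cf i j p := coeff_C_mul _ _ _

lemma cf_rep_30 (c3 c2 c1 c0 : ℂ) : cf 3 0 (rep c3 c2 c1 c0) = c3 := by
  simp only [rep, cf_add, cf_C_mul, cf_XY]; norm_num
lemma cf_rep_21 (c3 c2 c1 c0 : ℂ) : cf 2 1 (rep c3 c2 c1 c0) = c2 := by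
  simp only [rep, cf_add, cf_C_mul, cf_XY]; norm_num
lemma cf_rep_12 (c3 c2 c1 c0 : ℂ) : cf 1 2 (rep c3 c2 c1 c0) = c1 := by
  simp only [rep, cf_add, cf_C_mul, cf_XY]; norm_num
lemma cf_rep_03 (c3 c2 c1 c0 : ℂ) : cf 0 3 (rep c3 c2 c1 c0) = c0 := by
  simp only [rep, cf_add, cf_C_mul, cf_XY]; norm_num

lemma fin2_finsupp (d : Fin 2 →₀ ℕ) : d = Finsupp.single 0 (d 0) + Finsupp.single 1 (d 1) := by
  ext i
  fin_cases i <;> simp [Finsupp.single_apply]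

lemma degree_fin2 (d : Fin 2 →₀ ℕ) : d.degree = d 0 + d 1 := by
  rw [Finsupp.degree_apply, Finset.sum_subset (Finset.subset_univ _)
    (fun i _ h => Finsupp.notMem_support_iff.mp h), Fin.sum_univ_two]

/-- Every homogeneous cubic is the canonical four-term combination of its coefficients. -/
lemma hrep {p : P2} (hp : p ∈ Vcubic) :
    p = rep (cf 3 0 p) (cf 2 1 p) (cf 1 2 p) (cf 0 3 p) := by
  have hhom : p.IsHomogeneous 3 := (mem_homogeneousSubmodule _ _).mp hp
  apply MvPolynomial.ext
  intro d
  have hd := fin2_finsupp d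
  have hrepc : ∀ c3 c2 c1 c0 : ℂ, coeff d (rep c3 c2 c1 c0) =
      (if 3 = d 0 ∧ 0 = d 1 then c3 else 0) + (if 2 = d 0 ∧ 1 = d 1 then c2 else 0)
      + (if 1 = d 0 ∧ 2 = d 1 then c1 else 0) + (if 0 = d 0 ∧ 3 = d 1 then c0 else 0) := by
    intro c3 c2 c1 c0
    conv_lhs => rw [hd]
    simp only [rep, coeff_add, coeff_C_mul, XY_pow, coeff_monomial, fs_eq]
    simp
  rw [hrepc]
  by_cases hdeg : d 0 + d 1 = 3
  · have hcp : coeff d p = cf (d 0) (d 1) p := by rw [cf, ← hd]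
    rcases (by omega : (d 0 = 3 ∧ d 1 = 0) ∨ (d 0 = 2 ∧ d 1 = 1) ∨ (d 0 = 1 ∧ d 1 = 2) ∨
        (d 0 = 0 ∧ d 1 = 3)) with ⟨h0,h1⟩|⟨h0,h1⟩|⟨h0,h1⟩|⟨h0,h1⟩ <;>
      rw [hcp] <;> norm_num [h0, h1]
  · rw [hhom.coeff_eq_zero (by rw [degree_fin2]; exact hdeg)]
    have hne : ∀ i j : ℕ, i + j = 3 → ¬(i = d 0 ∧ j = d 1) := by
      rintro i j hij ⟨rfl, rfl⟩; omega
    rw [if_neg (hne 3 0 rfl), if_neg (hne 2 1 rfl), if_neg (hne 1 2 rfl), if_neg (hne 0 3 rfl)]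
    simp

/-- Multiplying a quadratic by `lf a b`. -/
lemma lexpand (a b u v w : ℂ) :
    lf a b * quad u v w = rep (b*u) (b*v - a*u) (b*w - a*v) (-(a*w)) := by
  simp only [lf, quad, rep, map_mul, map_sub, map_neg]
  ring

lemma cube_expand (a b : ℂ) :
    lf a b ^ 3 = rep (b^3) (-(3*a*b^2)) (3*a^2*b) (-(a^3)) := by
  simp only [lf, rep, map_mul, map_pow, map_neg, map_ofNat]
  ring

lemma C_mul_rep (c c3 c2 c1 c0 : ℂ) :
    C c * rep c3 c2 c1 c0 = rep (c*c3) (c*c2) (c*c1) (c*c0) := by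
  simp only [rep, map_mul]
  ring

lemma comb_quad (s t u v w u' v' w' : ℂ) (a b : ℂ) :
    C s * (lf a b * quad u v w) + C t * (lf a b * quad u' v' w') =
      lf a b * quad (s*u + t*u') (s*v + t*v') (s*w + t*w') := by
  simp only [quad, map_add, map_mul]
  ring

lemma quad_zero : quad 0 0 0 = 0 := by simp [quad]

/-- Evaluation of a rep at `(a, b)`. -/
lemma eval_rep (a b c3 c2 c1 c0 : ℂ) :
    eval ![a, b] (rep c3 c2 c1 c0) = c3*a^3 + c2*a^2*b + c1*a*b^2 + c0*b^3 := by
  simp [rep, Xv, Yv]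
  ring

lemma eval_lf (a b : ℂ) : eval ![a, b] (lf a b) = 0 := by
  simp [lf, Xv, Yv]
  ring

/-- If `lf a b` divides a homogeneous cubic, the corresponding root relation holds. -/
lemma root_of_dvd {a b : ℂ} {p : P2} (hp : p ∈ Vcubic) (h : lf a b ∣ p) :
    cf 3 0 p * a^3 + cf 2 1 p * a^2*b + cf 1 2 p * a*b^2 + cf 0 3 p * b^3 = 0 := by
  obtain ⟨m, hm⟩ := h
  have h1 : eval ![a, b] p = 0 := by rw [hm, eval_mul, eval_lf, zero_mul]
  have h2 : eval ![a, b] p =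
      cf 3 0 p * a^3 + cf 2 1 p * a^2*b + cf 1 2 p * a*b^2 + cf 0 3 p * b^3 := by
    conv_lhs => rw [hrep hp]
    rw [eval_rep]
  rw [← h2, h1]

/-- Conversely, the root relation gives an explicit quadratic cofactor. -/
lemma quad_of_root {a b : ℂ} {p : P2} (hab : a ≠ 0 ∨ b ≠ 0) (hp : p ∈ Vcubic)
    (hroot : cf 3 0 p * a^3 + cf 2 1 p * a^2*b + cf 1 2 p * a*b^2 + cf 0 3 p * b^3 = 0) :
    ∃ u v w : ℂ, p = lf a b * quad u v w := by
  set c3 := cf 3 0 p with hc3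
  set c2 := cf 2 1 p with hc2
  set c1 := cf 1 2 p with hc1
  set c0 := cf 0 3 p with hc0
  by_cases hb : b = 0
  · subst hb
    have ha : a ≠ 0 := hab.resolve_right (fun h => h rfl)
    have hc3z : c3 = 0 := by
      have : c3 * a^3 = 0 := by linear_combination hroot
      rcases mul_eq_zero.mp this with h | h
      · exact h
      · exact absurd (pow_eq_zero_iff (by norm_num) |>.mp h) ha
    refine ⟨-(c2/a), -(c1/a), -(c0/a), ?_⟩
    conv_lhs => rw [hrep hp, ← hc3, ← hc2, ← hc1, ← hc0]
    rw [lexpand]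
    rw [show (0:ℂ)*(-(c2/a)) = c3 by rw [hc3z]; ring,
        show (0:ℂ)*(-(c1/a)) - a*(-(c2/a)) = c2 by field_simp; ring,
        show (0:ℂ)*(-(c0/a)) - a*(-(c1/a)) = c1 by field_simp; ring,
        show -(a*(-(c0/a))) = c0 by field_simp]
  · refine ⟨c3/b, (c2*b + c3*a)/b^2, (c1*b^2 + c2*a*b + c3*a^2)/b^3, ?_⟩
    conv_lhs => rw [hrep hp, ← hc3, ← hc2, ← hc1, ← hc0]
    rw [lexpand]
    rw [show b*(c3/b) = c3 by field_simp,
        show b*((c2*b + c3*a)/b^2) - a*(c3/b) = c2 by field_simp; ring,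
        show b*((c1*b^2 + c2*a*b + c3*a^2)/b^3) - a*((c2*b + c3*a)/b^2) = c1 by
          field_simp; ring,
        show -(a*((c1*b^2 + c2*a*b + c3*a^2)/b^3)) = c0 by
          field_simp; linear_combination -hroot]

/-- The value of the symplectic form against a perfect cube. -/
lemma omega_cube (c a b : ℂ) (q : P2) :
    omegaForm (C c * lf a b ^ 3) q =
      c * (cf 3 0 q * a^3 + cf 2 1 q * a^2*b + cf 1 2 q * a*b^2 + cf 0 3 q * b^3) := by
  rw [omegaForm, cube_expand, C_mul_rep, cf_rep_30, cf_rep_21, cf_rep_12, cf_rep_03]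
  ring

/-- The symplectic form of two multiples of `lf a b`, in terms of cofactor coefficients. -/
lemma omega_prod (a b u v w u' v' w' : ℂ) :
    omegaForm (lf a b * quad u v w) (lf a b * quad u' v' w') =
      (2*a*b*(w*u' - u*w') - b^2*(v*w' - w*v') - a^2*(u*v' - v*u')) / 3 := by
  rw [omegaForm, lexpand, lexpand, cf_rep_30, cf_rep_21, cf_rep_12, cf_rep_03,
    cf_rep_30, cf_rep_21, cf_rep_12, cf_rep_03]
  ring

/-- Scalar linear-algebra core of the backward direction. -/
lemma key (a b u v w u' v' w' : ℂ)
    (hind : ∀ s t : ℂ, s*u + t*u' = 0 → s*v + t*v' = 0 → s*w + t*w' = 0 → s = 0 ∧ t = 0)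
    (hom : 2*a*b*(w*u' - u*w') - b^2*(v*w' - w*v') - a^2*(u*v' - v*u') = 0) :
    ∃ s t : ℂ, s*u + t*u' = b^2 ∧ s*v + t*v' = -(2*a*b) ∧ s*w + t*w' = a^2 := by
  by_cases h2 : u*v' - v*u' ≠ 0
  · refine ⟨(b^2*v' + 2*a*b*u')/(u*v' - v*u'), (-(2*a*b)*u - b^2*v)/(u*v' - v*u'), ?_, ?_, ?_⟩
    · rw [div_mul_eq_mul_div, div_mul_eq_mul_div, ← add_div, div_eq_iff h2]; ring
    · rw [div_mul_eq_mul_div, div_mul_eq_mul_div, ← add_div, div_eq_iff h2]; ring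
    · rw [div_mul_eq_mul_div, div_mul_eq_mul_div, ← add_div, div_eq_iff h2]; linear_combination hom
  · push_neg at h2
    by_cases h1 : u*w' - w*u' ≠ 0
    · refine ⟨(b^2*w' - a^2*u')/(u*w' - w*u'), (a^2*u - b^2*w)/(u*w' - w*u'), ?_, ?_, ?_⟩
      · rw [div_mul_eq_mul_div, div_mul_eq_mul_div, ← add_div, div_eq_iff h1]; ring
      · rw [div_mul_eq_mul_div, div_mul_eq_mul_div, ← add_div, div_eq_iff h1]; linear_combination -hom
      · rw [div_mul_eq_mul_div, div_mul_eq_mul_div, ← add_div, div_eq_iff h1]; ring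
    · push_neg at h1
      by_cases h0 : v*w' - w*v' ≠ 0
      · refine ⟨(-(2*a*b)*w' - a^2*v')/(v*w' - w*v'), (a^2*v + 2*a*b*w)/(v*w' - w*v'), ?_, ?_, ?_⟩
        · rw [div_mul_eq_mul_div, div_mul_eq_mul_div, ← add_div, div_eq_iff h0]; linear_combination hom
        · rw [div_mul_eq_mul_div, div_mul_eq_mul_div, ← add_div, div_eq_iff h0]; ring
        · rw [div_mul_eq_mul_div, div_mul_eq_mul_div, ← add_div, div_eq_iff h0]; ring
      · push_neg at h0
        exfalso
        by_cases hu : u ≠ 0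
        · have := hind (-u') u (by ring) (by linear_combination h2) (by linear_combination h1)
          exact hu this.2
        push_neg at hu
        by_cases hv : v ≠ 0
        · have := hind (-v') v (by linear_combination -h2) (by ring) (by linear_combination h0)
          exact hv this.2
        push_neg at hv
        by_cases hw : w ≠ 0
        · have := hind (-w') w (by linear_combination -h1) (by linear_combination -h0) (by ring)
          exact hw this.2
        push_neg at hw
        have := hind 1 0 (by simp [hu]) (by simp [hv]) (by simp [hw])
        exact one_ne_zero this.1

set_option synthInstance.maxHeartbeats 1000000 in
theorem statement2 (W : Submodule ℂ P2) (hW : IsLagrangian W) :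
    (∃ p ∈ W, IsPerfectCube p) ↔
      ∃ a b : ℂ, (a ≠ 0 ∨ b ≠ 0) ∧ ∀ p ∈ W, lf a b ∣ p := by
  obtain ⟨hWV, hrank, homega⟩ := hW
  constructor
  · rintro ⟨p, hpW, c, a, b, hc, hab, rfl⟩
    refine ⟨a, b, hab, fun q hqW => ?_⟩
    have h0 := homega _ hpW q hqW
    rw [omega_cube] at h0
    have hq0 : cf 3 0 q * a^3 + cf 2 1 q * a^2*b + cf 1 2 q * a*b^2 + cf 0 3 q * b^3 = 0 :=
      (mul_eq_zero.mp h0).resolve_left hc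
    obtain ⟨u, v, w, hq⟩ := quad_of_root hab (hWV hqW) hq0
    exact ⟨_, hq⟩
  · rintro ⟨a, b, hab, hdvd⟩
    -- find two independent elements of W
    haveI : Module.Finite ℂ W := Module.finite_of_finrank_pos (by rw [hrank]; norm_num)
    haveI : Module.Free ℂ W := Module.Free.of_divisionRing ℂ W
    let bW := Module.finBasisOfFinrankEq ℂ W hrank
    set p : P2 := ((bW 0 : W) : P2) with hp
    set q : P2 := ((bW 1 : W) : P2) with hq
    have hpW : p ∈ W := (bW 0 : W).2
    have hqW : q ∈ W := (bW 1 : W).2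
    have hind0 : ∀ s t : ℂ, s • p + t • q = 0 → s = 0 ∧ t = 0 := by
      intro s t hst
      have h' : s • bW 0 + t • bW 1 = 0 := by
        apply Subtype.ext
        simpa using hst
      have hli := bW.linearIndependent
      rw [Fintype.linearIndependent_iff] at hli
      have := hli ![s, t] (by rw [Fin.sum_univ_two]; simpa using h')
      exact ⟨this 0, this 1⟩
    -- factor both through lf a b
    obtain ⟨u, v, w, hpf⟩ := quad_of_root hab (hWV hpW) (root_of_dvd (hWV hpW) (hdvd p hpW))
    obtain ⟨u', v', w', hqf⟩ := quad_of_root hab (hWV hqW) (root_of_dvd (hWV hqW) (hdvd q hqW))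
    have hind : ∀ s t : ℂ, s*u + t*u' = 0 → s*v + t*v' = 0 → s*w + t*w' = 0 →
        s = 0 ∧ t = 0 := by
      intro s t e1 e2 e3
      apply hind0 s t
      rw [smul_eq_C_mul, smul_eq_C_mul, hpf, hqf, comb_quad, e1, e2, e3, quad_zero, mul_zero]
    have hom0 : 2*a*b*(w*u' - u*w') - b^2*(v*w' - w*v') - a^2*(u*v' - v*u') = 0 := by
      have := homega p hpW q hqW
      rw [hpf, hqf, omega_prod] at this
      field_simp at this
      linear_combination this
    obtain ⟨s, t, e1, e2, e3⟩ := key a b u v w u' v' w' hind hom0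
    have hcube : lf a b ^ 3 = s • p + t • q := by
      rw [smul_eq_C_mul, smul_eq_C_mul, hpf, hqf, comb_quad, e1, e2, e3, cube_expand, lexpand]
      rw [show b*b^2 = b^3 from by ring, show b*(-(2*a*b)) - a*b^2 = -(3*a*b^2) from by ring,
        show b*a^2 - a*(-(2*a*b)) = 3*a^2*b from by ring, show -(a*a^2) = -(a^3) from by ring]
    refine ⟨lf a b ^ 3, ?_, 1, a, b, one_ne_zero, hab, by simp⟩
    rw [hcube]
    exact W.add_mem (W.smul_mem s hpW) (W.smul_mem t hqW)
end
end

section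
/- Every Lagrangian of V lies in the SL(2,ℂ)-orbit of exactly one of the three Lagrangians span{X³, X²Y}, span{X³, XY²}, span{X²Y, X³ + Y³}; that is, these three orbits are pairwise disjoint and their union is the set of all Lagrangians of V. -/
noncomputable section

open MvPolynomial

/-- The Lagrangian `span{X³, X²Y}`. -/
def L₁ : Submodule ℂ P2 := Submodule.span ℂ {Xv ^ 3, Xv ^ 2 * Yv}

/-- The Lagrangian `span{X³, XY²}`. -/
def L₂ : Submodule ℂ P2 := Submodule.span ℂ {Xv ^ 3, Xv * Yv ^ 2}

/-- The Lagrangian `span{X²Y, X³ + Y³}`. -/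
def L₃ : Submodule ℂ P2 := Submodule.span ℂ {Xv ^ 2 * Yv, Xv ^ 3 + Yv ^ 3}

abbrev SL2 : Type := Matrix.SpecialLinearGroup (Fin 2) ℂ

def mu (i j : ℕ) : Fin 2 →₀ ℕ := Finsupp.single 0 i + Finsupp.single 1 j
lemma mu_apply0 (i j : ℕ) : mu i j 0 = i := by simp [mu, Finsupp.single_apply]
lemma mu_apply1 (i j : ℕ) : mu i j 1 = j := by simp [mu, Finsupp.single_apply]
lemma mu_eq_iff {i j a b : ℕ} : mu i j = mu a b ↔ (i = a ∧ j = b) := by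
  constructor
  · intro h
    constructor
    · have := congrArg (fun f => f 0) h; simpa [mu_apply0] using this
    · have := congrArg (fun f => f 1) h; simpa [mu_apply1] using this
  · rintro ⟨rfl, rfl⟩; rfl
lemma eq_mu (d : Fin 2 →₀ ℕ) : d = mu (d 0) (d 1) := by
  ext x; fin_cases x
  · simp [mu_apply0]
  · simp [mu_apply1]
def cub (a0 a1 a2 a3 : ℂ) : P2 :=
  C a0 * Xv ^ 3 + C a1 * (Xv ^ 2 * Yv) + C a2 * (Xv * Yv ^ 2) + C a3 * Yv ^ 3
lemma monXY (a b : ℕ) : Xv ^ a * Yv ^ b = monomial (mu a b) (1 : ℂ) := by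
  simp [Xv, Yv, mu, X_pow_eq_monomial, monomial_mul]
lemma cub_eq_mon (a0 a1 a2 a3 : ℂ) :
    cub a0 a1 a2 a3 = monomial (mu 3 0) a0 + monomial (mu 2 1) a1
      + monomial (mu 1 2) a2 + monomial (mu 0 3) a3 := by
  rw [show cub a0 a1 a2 a3 = C a0 * (Xv^3*Yv^0) + C a1 * (Xv^2*Yv^1)
      + C a2 * (Xv^1*Yv^2) + C a3 * (Xv^0*Yv^3) by unfold cub; ring]
  rw [monXY, monXY, monXY, monXY]
  simp [C_mul_monomial]
lemma cf_cub (i j : ℕ) (a0 a1 a2 a3 : ℂ) :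
    cf i j (cub a0 a1 a2 a3) =
      if i = 3 ∧ j = 0 then a0 else if i = 2 ∧ j = 1 then a1
      else if i = 1 ∧ j = 2 then a2 else if i = 0 ∧ j = 3 then a3 else 0 := by
  rw [cub_eq_mon]
  show coeff (mu i j) _ = _
  simp only [coeff_add, coeff_monomial]
  simp only [mu_eq_iff]
  split_ifs <;> first | omega | ring

-- chunk 2
lemma cf30 (a0 a1 a2 a3 : ℂ) : cf 3 0 (cub a0 a1 a2 a3) = a0 := by rw [cf_cub]; norm_num
lemma cf21 (a0 a1 a2 a3 : ℂ) : cf 2 1 (cub a0 a1 a2 a3) = a1 := by rw [cf_cub]; norm_num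
lemma cf12 (a0 a1 a2 a3 : ℂ) : cf 1 2 (cub a0 a1 a2 a3) = a2 := by rw [cf_cub]; norm_num
lemma cf03 (a0 a1 a2 a3 : ℂ) : cf 0 3 (cub a0 a1 a2 a3) = a3 := by rw [cf_cub]; norm_num

lemma degree_mu (i j : ℕ) : (mu i j).degree = i + j := by
  have : (mu i j).degree = ∑ x : Fin 2, mu i j x :=
    Finset.sum_subset (Finset.subset_univ _)
      (fun x _ hx => Finsupp.notMem_support_iff.mp hx)
  rw [this, Fin.sum_univ_two, mu_apply0, mu_apply1]

lemma cub_mem_Vcubic (a0 a1 a2 a3 : ℂ) : cub a0 a1 a2 a3 ∈ Vcubic := by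
  rw [cub_eq_mon]
  refine Submodule.add_mem _ (Submodule.add_mem _ (Submodule.add_mem _ ?_ ?_) ?_) ?_ <;>
    exact isHomogeneous_monomial _ (by rw [degree_mu])

lemma rep_of_mem_Vcubic {p : P2} (hp : p ∈ Vcubic) :
    p = cub (cf 3 0 p) (cf 2 1 p) (cf 1 2 p) (cf 0 3 p) := by
  have hh : p.IsHomogeneous 3 := hp
  rw [cub_eq_mon]
  ext d
  simp only [coeff_add, coeff_monomial]
  by_cases h : d 0 + d 1 = 3
  · obtain ⟨i, j, rfl⟩ : ∃ i j, d = mu i j := ⟨d 0, d 1, eq_mu d⟩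
    rw [mu_apply0, mu_apply1] at h
    simp only [mu_eq_iff]
    have h3 : i ≤ 3 := by omega
    interval_cases i <;>
      [ (obtain rfl : j = 3 := by omega); (obtain rfl : j = 2 := by omega);
        (obtain rfl : j = 1 := by omega); (obtain rfl : j = 0 := by omega)] <;>
      · norm_num
        rfl
  · have hz : coeff d p = 0 := hh.coeff_eq_zero (by rw [eq_mu d, degree_mu]; omega)
    rw [hz, eq_mu d]
    show (0:ℂ) = _
    simp only [mu_eq_iff]
    split_ifs <;> first | omega | ring

lemma cub_inj {a0 a1 a2 a3 b0 b1 b2 b3 : ℂ} (h : cub a0 a1 a2 a3 = cub b0 b1 b2 b3) :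
    a0 = b0 ∧ a1 = b1 ∧ a2 = b2 ∧ a3 = b3 := by
  refine ⟨?_, ?_, ?_, ?_⟩
  · have := congrArg (cf 3 0) h; rwa [cf30, cf30] at this
  · have := congrArg (cf 2 1) h; rwa [cf21, cf21] at this
  · have := congrArg (cf 1 2) h; rwa [cf12, cf12] at this
  · have := congrArg (cf 0 3) h; rwa [cf03, cf03] at this

lemma cub_add (a0 a1 a2 a3 b0 b1 b2 b3 : ℂ) :
    cub a0 a1 a2 a3 + cub b0 b1 b2 b3 = cub (a0+b0) (a1+b1) (a2+b2) (a3+b3) := by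
  unfold cub; simp only [map_add]; ring

lemma cub_smul (c a0 a1 a2 a3 : ℂ) :
    c • cub a0 a1 a2 a3 = cub (c*a0) (c*a1) (c*a2) (c*a3) := by
  rw [smul_eq_C_mul]; unfold cub; simp only [map_mul]; ring

lemma omega_cub (a0 a1 a2 a3 b0 b1 b2 b3 : ℂ) :
    omegaForm (cub a0 a1 a2 a3) (cub b0 b1 b2 b3) =
      a0*b3 - a3*b0 - (1/3)*(a1*b2 - a2*b1) := by
  simp [omegaForm, cf30, cf21, cf12, cf03]

-- chunk 3: subst machinery

lemma subst_C (g : SL2) (a : ℂ) : subst g (C a) = C a := by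
  simp [subst, algebraMap_eq]

lemma subst_Xv (g : SL2) : subst g Xv = C (g.1 0 0) * Xv + C (g.1 0 1) * Yv := by
  simp [subst, Xv]

lemma subst_Yv (g : SL2) : subst g Yv = C (g.1 1 0) * Xv + C (g.1 1 1) * Yv := by
  simp [subst, Yv]

lemma subst_subst (g h : SL2) (p : P2) : subst g (subst h p) = subst (h * g) p := by
  rw [show subst g (subst h p) = (subst g) (aeval (fun i => C (h.1 i 0) * Xv + C (h.1 i 1) * Yv) p) from rfl,
    comp_aeval_apply]
  rw [show subst (h*g) p = aeval (fun i => C ((h*g).1 i 0) * Xv + C ((h*g).1 i 1) * Yv) p from rfl]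
  have hfun : (fun i => (subst g) (C (h.1 i 0) * Xv + C (h.1 i 1) * Yv))
      = (fun i => C ((h*g).1 i 0) * Xv + C ((h*g).1 i 1) * Yv) := by
    funext i
    simp only [map_add, map_mul, subst_C, subst_Xv, subst_Yv]
    have hmul : (h * g).1 = h.1 * g.1 := by simp
    rw [hmul]
    simp only [Matrix.mul_apply, Fin.sum_univ_two, map_add, map_mul]
    ring
  rw [hfun]

lemma subst_one (p : P2) : subst 1 p = p := by
  have h : (fun i => C ((1:SL2).1 i 0) * Xv + C ((1:SL2).1 i 1) * Yv)
      = fun i : Fin 2 => (X i : P2) := by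
    funext i
    fin_cases i <;> simp [Matrix.one_apply, Xv, Yv]
  rw [subst, h, aeval_X_left_apply]

lemma subst_cancel (g : SL2) (p : P2) : subst g⁻¹ (subst g p) = p := by
  rw [subst_subst]
  simp [subst_one]

lemma subst_cancel' (g : SL2) (p : P2) : subst g (subst g⁻¹ p) = p := by
  rw [subst_subst]
  simp [subst_one]

lemma det_entries (g : SL2) : g.1 0 0 * g.1 1 1 - g.1 0 1 * g.1 1 0 = 1 := by
  have h := g.2
  rwa [Matrix.det_fin_two] at h

lemma subst_cub (g : SL2) (a0 a1 a2 a3 : ℂ) :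
    subst g (cub a0 a1 a2 a3) =
      cub (a0*(g.1 0 0)^3 + a1*(g.1 0 0)^2*(g.1 1 0) + a2*(g.1 0 0)*(g.1 1 0)^2 + a3*(g.1 1 0)^3)
          (3*a0*(g.1 0 0)^2*(g.1 0 1) + a1*((g.1 0 0)^2*(g.1 1 1) + 2*(g.1 0 0)*(g.1 0 1)*(g.1 1 0))
            + a2*(2*(g.1 0 0)*(g.1 1 0)*(g.1 1 1) + (g.1 0 1)*(g.1 1 0)^2) + 3*a3*(g.1 1 0)^2*(g.1 1 1))
          (3*a0*(g.1 0 0)*(g.1 0 1)^2 + a1*(2*(g.1 0 0)*(g.1 0 1)*(g.1 1 1) + (g.1 0 1)^2*(g.1 1 0))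
            + a2*((g.1 0 0)*(g.1 1 1)^2 + 2*(g.1 0 1)*(g.1 1 0)*(g.1 1 1)) + 3*a3*(g.1 1 0)*(g.1 1 1)^2)
          (a0*(g.1 0 1)^3 + a1*(g.1 0 1)^2*(g.1 1 1) + a2*(g.1 0 1)*(g.1 1 1)^2 + a3*(g.1 1 1)^3) := by
  simp only [cub, map_add, map_mul, map_pow, subst_C, subst_Xv, subst_Yv]
  simp only [map_add, map_mul, map_pow, map_ofNat]
  ring

lemma omega_subst (g : SL2) (a0 a1 a2 a3 b0 b1 b2 b3 : ℂ) :
    omegaForm (subst g (cub a0 a1 a2 a3)) (subst g (cub b0 b1 b2 b3))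
      = omegaForm (cub a0 a1 a2 a3) (cub b0 b1 b2 b3) := by
  have hdet := det_entries g
  rw [subst_cub, subst_cub, omega_cub, omega_cub]
  linear_combination (((g.1 0 0*g.1 1 1 - g.1 0 1*g.1 1 0)^2 + (g.1 0 0*g.1 1 1 - g.1 0 1*g.1 1 0) + 1)
    * (a0*b3 - a3*b0 - (1/3)*(a1*b2 - a2*b1))) * hdet

-- chunk 4: mapAct and span helpers

lemma mem_mapAct {g : SL2} {W : Submodule ℂ P2} {p : P2} :
    p ∈ mapAct g W ↔ ∃ q ∈ W, subst g q = p := by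
  simp [mapAct, Submodule.mem_map]

lemma mapAct_mapAct (g h : SL2) (W : Submodule ℂ P2) :
    mapAct g (mapAct h W) = mapAct (h * g) W := by
  rw [mapAct, mapAct, mapAct, ← Submodule.map_comp]
  refine congrArg (fun f => Submodule.map f W) ?_
  apply LinearMap.ext
  intro p
  simp [subst_subst]

lemma mapAct_cancel (g : SL2) (W : Submodule ℂ P2) : mapAct g (mapAct g⁻¹ W) = W := by
  rw [mapAct_mapAct]
  have h1 : g⁻¹ * g = 1 := inv_mul_cancel g
  rw [h1]
  rw [mapAct]
  apply Submodule.ext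
  intro p
  simp only [Submodule.mem_map]
  constructor
  · rintro ⟨q, hq, rfl⟩
    simpa [subst_one] using hq
  · intro hp
    exact ⟨p, hp, subst_one p⟩

lemma mapAct_cancel' (g : SL2) (W : Submodule ℂ P2) : mapAct g⁻¹ (mapAct g W) = W := by
  have := mapAct_cancel g⁻¹ W
  rwa [inv_inv] at this

def substEquiv (g : SL2) : P2 ≃ₗ[ℂ] P2 :=
  LinearEquiv.ofLinear (subst g).toLinearMap (subst g⁻¹).toLinearMap
    (by apply LinearMap.ext; intro p; simp [subst_cancel'])
    (by apply LinearMap.ext; intro p; simp [subst_cancel])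

lemma finrank_mapAct (g : SL2) (W : Submodule ℂ P2) :
    Module.finrank ℂ (mapAct g W) = Module.finrank ℂ W := by
  have : mapAct g W = W.map (substEquiv g : P2 →ₗ[ℂ] P2) := rfl
  rw [this, LinearEquiv.finrank_map_eq]

lemma mapAct_span_pair (g : SL2) (x y : P2) :
    mapAct g (Submodule.span ℂ {x, y}) = Submodule.span ℂ {subst g x, subst g y} := by
  rw [mapAct, Submodule.map_span]
  congr 1
  simp [Set.image_insert_eq]

lemma span_pair_shift {x y : P2} (a c : ℂ) (hc : c ≠ 0) :
    Submodule.span ℂ {x, a • x + c • y} = Submodule.span ℂ {x, y} := by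
  apply le_antisymm
  · rw [Submodule.span_le]
    rintro z (rfl | rfl)
    · exact Submodule.subset_span (Set.mem_insert _ _)
    · exact Submodule.mem_span_pair.mpr ⟨a, c, rfl⟩
  · rw [Submodule.span_le]
    rintro z (rfl | rfl)
    · exact Submodule.subset_span (Set.mem_insert _ _)
    · refine Submodule.mem_span_pair.mpr ⟨-(a/c), 1/c, ?_⟩
      rw [smul_add, smul_smul, smul_smul]
      field_simp
      module

lemma range_pair (x y : P2) : Set.range ![x, y] = {x, y} := by
  ext z
  constructor
  · rintro ⟨i, rfl⟩
    fin_cases i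
    · exact Set.mem_insert _ _
    · exact Set.mem_insert_of_mem _ rfl
  · rintro (rfl | rfl)
    · exact ⟨0, rfl⟩
    · exact ⟨1, rfl⟩

lemma finrank_span_pair' {x y : P2} (h : LinearIndependent ℂ ![x, y]) :
    Module.finrank ℂ (Submodule.span ℂ {x, y}) = 2 := by
  rw [← range_pair x y, finrank_span_eq_card h, Fintype.card_fin]

lemma exists_compl {W : Submodule ℂ P2} (hW : Module.finrank ℂ W = 2) {x : P2}
    (hx : x ∈ W) (hx0 : x ≠ 0) : ∃ y ∈ W, y ∉ Submodule.span ℂ {x} := by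
  by_contra hcon
  push_neg at hcon
  have hle : W ≤ Submodule.span ℂ {x} := hcon
  have : FiniteDimensional ℂ (Submodule.span ℂ ({x} : Set P2)) :=
    FiniteDimensional.span_of_finite ℂ (Set.finite_singleton x)
  have h1 : Module.finrank ℂ W ≤ Module.finrank ℂ (Submodule.span ℂ ({x} : Set P2)) :=
    LinearMap.finrank_le_finrank_of_injective (Submodule.inclusion_injective hle)
  rw [hW, finrank_span_singleton hx0] at h1
  omega

lemma span_eq_of_two {W : Submodule ℂ P2} (h2 : Module.finrank ℂ W = 2) {x y : P2}
    (hx : x ∈ W) (hy : y ∈ W) (hx0 : x ≠ 0) (hyx : y ∉ Submodule.span ℂ {x}) :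
    W = Submodule.span ℂ {x, y} := by
  have hind : LinearIndependent ℂ ![x, y] := by
    rw [LinearIndependent.pair_iff' hx0]
    intro a hcon
    exact hyx (hcon ▸ Submodule.smul_mem _ a (Submodule.mem_span_singleton_self x))
  have hfr : Module.finrank ℂ (Submodule.span ℂ {x, y}) = 2 := finrank_span_pair' hind
  have hle : Submodule.span ℂ {x, y} ≤ W := by
    rw [Submodule.span_le]
    rintro z (rfl | rfl) <;> assumption
  have : FiniteDimensional ℂ W := FiniteDimensional.of_finrank_pos (by omega)
  exact (Submodule.eq_of_le_of_finrank_le hle (by omega)).symm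

-- chunk 5: lf, products, discriminant, factorization

lemma cub_congr {a0 a1 a2 a3 b0 b1 b2 b3 : ℂ} (h0 : a0 = b0) (h1 : a1 = b1)
    (h2 : a2 = b2) (h3 : a3 = b3) : cub a0 a1 a2 a3 = cub b0 b1 b2 b3 := by
  rw [h0, h1, h2, h3]

lemma lf_mul (α1 β1 α2 β2 α3 β3 : ℂ) :
    lf α1 β1 * lf α2 β2 * lf α3 β3 =
      cub (β1*β2*β3) (-(α1*β2*β3 + β1*α2*β3 + β1*β2*α3))
          (α1*α2*β3 + α1*β2*α3 + β1*α2*α3) (-(α1*α2*α3)) := by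
  unfold lf cub
  simp only [map_mul, map_neg, map_add]
  ring

lemma C_mul_cub (c a0 a1 a2 a3 : ℂ) :
    C c * cub a0 a1 a2 a3 = cub (c*a0) (c*a1) (c*a2) (c*a3) := by
  rw [← smul_eq_C_mul, cub_smul]

lemma cube_coords (c a b : ℂ) :
    C c * lf a b ^ 3 = cub (c*b^3) (-(3*c*b^2*a)) (3*c*b*a^2) (-(c*a^3)) := by
  rw [show lf a b ^ 3 = lf a b * lf a b * lf a b by ring, lf_mul, C_mul_cub]
  exact cub_congr (by ring) (by ring) (by ring) (by ring)

def disc (a0 a1 a2 a3 : ℂ) : ℂ :=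
  18*a0*a1*a2*a3 - 4*a1^3*a3 + a1^2*a2^2 - 4*a0*a2^3 - 27*a0^2*a3^2

lemma disc_prod (α1 β1 α2 β2 α3 β3 : ℂ) :
    disc (β1*β2*β3) (-(α1*β2*β3 + β1*α2*β3 + β1*β2*α3))
        (α1*α2*β3 + α1*β2*α3 + β1*α2*α3) (-(α1*α2*α3)) =
      ((α1*β2 - α2*β1) * (α1*β3 - α3*β1) * (α2*β3 - α3*β2))^2 := by
  unfold disc; ring

lemma disc_subst (g : SL2) (a0 a1 a2 a3 : ℂ) :
    disc (a0*(g.1 0 0)^3 + a1*(g.1 0 0)^2*(g.1 1 0) + a2*(g.1 0 0)*(g.1 1 0)^2 + a3*(g.1 1 0)^3)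
         (3*a0*(g.1 0 0)^2*(g.1 0 1) + a1*((g.1 0 0)^2*(g.1 1 1) + 2*(g.1 0 0)*(g.1 0 1)*(g.1 1 0))
            + a2*(2*(g.1 0 0)*(g.1 1 0)*(g.1 1 1) + (g.1 0 1)*(g.1 1 0)^2) + 3*a3*(g.1 1 0)^2*(g.1 1 1))
         (3*a0*(g.1 0 0)*(g.1 0 1)^2 + a1*(2*(g.1 0 0)*(g.1 0 1)*(g.1 1 1) + (g.1 0 1)^2*(g.1 1 0))
            + a2*((g.1 0 0)*(g.1 1 1)^2 + 2*(g.1 0 1)*(g.1 1 0)*(g.1 1 1)) + 3*a3*(g.1 1 0)*(g.1 1 1)^2)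
         (a0*(g.1 0 1)^3 + a1*(g.1 0 1)^2*(g.1 1 1) + a2*(g.1 0 1)*(g.1 1 1)^2 + a3*(g.1 1 1)^3)
      = disc a0 a1 a2 a3 := by
  have hdet := det_entries g
  set A := g.1 0 0
  set B := g.1 0 1
  set Cc := g.1 1 0
  set D := g.1 1 1
  unfold disc
  linear_combination (((A*D-B*Cc)^5 + (A*D-B*Cc)^4 + (A*D-B*Cc)^3 + (A*D-B*Cc)^2 + (A*D-B*Cc) + 1)
    * (18*a0*a1*a2*a3 - 4*a1^3*a3 + a1^2*a2^2 - 4*a0*a2^3 - 27*a0^2*a3^2)) * hdet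

-- chunk 6: factorization of binary cubics
lemma exists_sqrt (w : ℂ) : ∃ s : ℂ, s^2 = w := IsAlgClosed.exists_pow_nat_eq w (by norm_num)

lemma factor_quadratic (q0 q1 q2 : ℂ) (h : ¬(q0 = 0 ∧ q1 = 0 ∧ q2 = 0)) :
    ∃ α2 β2 α3 β3 : ℂ, (α2 ≠ 0 ∨ β2 ≠ 0) ∧ (α3 ≠ 0 ∨ β3 ≠ 0) ∧
      q0 = β2*β3 ∧ q1 = -(α2*β3 + β2*α3) ∧ q2 = α2*α3 := by
  by_cases h0 : q0 = 0
  · subst h0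
    refine ⟨-1, 0, -q2, q1, Or.inl (by norm_num), ?_, by ring, by ring, by ring⟩
    by_cases hq1 : q1 = 0
    · refine Or.inl fun hq2 => h ⟨rfl, hq1, ?_⟩
      have : q2 = 0 := by
        have := hq2
        field_simp at this
        exact neg_eq_zero.mp this
      exact this
    · exact Or.inr hq1
  · obtain ⟨s, hs⟩ := exists_sqrt (q1^2 - 4*q0*q2)
    refine ⟨(-q1+s)/(2*q0), 1, (-q1-s)/2, q0, Or.inr one_ne_zero, Or.inr h0, by ring, ?_, ?_⟩
    · field_simp
      ring
    · field_simp
      linear_combination hs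

-- chunk 7: cubic factorization
lemma factor_linear (a0 a1 a2 a3 : ℂ) (h : ¬(a0 = 0 ∧ a1 = 0 ∧ a2 = 0 ∧ a3 = 0)) :
    ∃ α1 β1 q0 q1 q2 : ℂ, (α1 ≠ 0 ∨ β1 ≠ 0) ∧ ¬(q0 = 0 ∧ q1 = 0 ∧ q2 = 0) ∧
      a0 = β1*q0 ∧ a1 = β1*q1 - α1*q0 ∧ a2 = β1*q2 - α1*q1 ∧ a3 = -(α1*q2) := by
  by_cases h0 : a0 = 0
  · refine ⟨1, 0, -a1, -a2, -a3, Or.inl one_ne_zero, ?_,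
      by rw [h0]; ring, by ring, by ring, by ring⟩
    rintro ⟨h1, h2, h3⟩
    exact h ⟨h0, neg_eq_zero.mp h1, neg_eq_zero.mp h2, neg_eq_zero.mp h3⟩
  · set f : Polynomial ℂ := Polynomial.C a3 + Polynomial.C a2 * Polynomial.X
      + Polynomial.C a1 * Polynomial.X^2 + Polynomial.C a0 * Polynomial.X^3 with hf
    have hdeg : f.degree = 3 := by
      rw [hf]
      compute_degree!
    obtain ⟨z, hz⟩ := IsAlgClosed.exists_root f (by rw [hdeg]; norm_num)
    have heval : a3 + a2*z + a1*z^2 + a0*z^3 = 0 := by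
      have := hz
      simp only [hf, Polynomial.IsRoot, Polynomial.eval_add, Polynomial.eval_mul,
        Polynomial.eval_pow, Polynomial.eval_C, Polynomial.eval_X] at this
      linear_combination this
    refine ⟨z, 1, a0, a1 + z*a0, a2 + z*(a1 + z*a0), Or.inr one_ne_zero, ?_,
      by ring, by ring, by ring, by linear_combination heval⟩
    rintro ⟨h1, _, _⟩
    exact h0 h1

lemma factor_cubic (a0 a1 a2 a3 : ℂ) (h : ¬(a0 = 0 ∧ a1 = 0 ∧ a2 = 0 ∧ a3 = 0)) :
    ∃ α1 β1 α2 β2 α3 β3 : ℂ, (α1 ≠ 0 ∨ β1 ≠ 0) ∧ (α2 ≠ 0 ∨ β2 ≠ 0) ∧ (α3 ≠ 0 ∨ β3 ≠ 0) ∧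
      a0 = β1*β2*β3 ∧ a1 = -(α1*β2*β3 + β1*α2*β3 + β1*β2*α3) ∧
      a2 = α1*α2*β3 + α1*β2*α3 + β1*α2*α3 ∧ a3 = -(α1*α2*α3) := by
  obtain ⟨α1, β1, q0, q1, q2, hl, hq, ha0, ha1, ha2, ha3⟩ := factor_linear a0 a1 a2 a3 h
  obtain ⟨α2, β2, α3, β3, h2, h3, hq0, hq1, hq2⟩ := factor_quadratic q0 q1 q2 hq
  exact ⟨α1, β1, α2, β2, α3, β3, hl, h2, h3, by linear_combination ha0 + β1*hq0,
    by linear_combination ha1 + β1*hq1 - α1*hq0, by linear_combination ha2 + β1*hq2 - α1*hq1,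
    by linear_combination ha3 - α1*hq2⟩

lemma cub_zero : cub 0 0 0 0 = (0 : P2) := by simp [cub]

lemma cub_ne_zero_coords {a0 a1 a2 a3 : ℂ} (h : cub a0 a1 a2 a3 ≠ 0) :
    ¬(a0 = 0 ∧ a1 = 0 ∧ a2 = 0 ∧ a3 = 0) := by
  rintro ⟨rfl, rfl, rfl, rfl⟩
  exact h cub_zero

lemma factor_P2 {a0 a1 a2 a3 : ℂ} (h : cub a0 a1 a2 a3 ≠ 0) :
    ∃ α1 β1 α2 β2 α3 β3 : ℂ, (α1 ≠ 0 ∨ β1 ≠ 0) ∧ (α2 ≠ 0 ∨ β2 ≠ 0) ∧ (α3 ≠ 0 ∨ β3 ≠ 0) ∧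
      cub a0 a1 a2 a3 = lf α1 β1 * lf α2 β2 * lf α3 β3 := by
  obtain ⟨α1, β1, α2, β2, α3, β3, h1, h2, h3, e0, e1, e2, e3⟩ :=
    factor_cubic a0 a1 a2 a3 (cub_ne_zero_coords h)
  exact ⟨α1, β1, α2, β2, α3, β3, h1, h2, h3, by rw [lf_mul]; exact cub_congr e0 e1 e2 e3⟩

-- chunk 8: repeated roots

lemma lf_smul (μ α β : ℂ) : lf (μ*α) (μ*β) = C μ * lf α β := by
  unfold lf
  simp only [map_mul]
  ring

lemma pair_prop {α β γ δ : ℂ} (h1 : α ≠ 0 ∨ β ≠ 0) (h2 : γ ≠ 0 ∨ δ ≠ 0)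
    (h : α*δ - β*γ = 0) : ∃ μ : ℂ, μ ≠ 0 ∧ γ = μ*α ∧ δ = μ*β := by
  by_cases hβ : β = 0
  · have hα : α ≠ 0 := by tauto
    refine ⟨γ/α, ?_, by field_simp, ?_⟩
    · intro hz
      have hγ : γ = 0 := by
        field_simp at hz
        simpa using hz
      have hδ : δ = 0 := by
        have : α*δ = 0 := by rw [hβ] at h; linear_combination h
        exact (mul_eq_zero.mp this).resolve_left hα
      tauto
    · have : α*δ = 0 := by rw [hβ] at h; linear_combination h
      have hδ : δ = 0 := (mul_eq_zero.mp this).resolve_left hα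
      rw [hδ, hβ]; ring
  · refine ⟨δ/β, ?_, ?_, by field_simp⟩
    · intro hz
      have hδ : δ = 0 := by
        field_simp at hz
        simpa using hz
      have hγ : γ = 0 := by
        have : β*γ = 0 := by rw [hδ] at h; linear_combination -h
        exact (mul_eq_zero.mp this).resolve_left hβ
      tauto
    · field_simp
      linear_combination -h

lemma finish_case {p : P2} (hnc : ¬ IsPerfectCube p) {c A B G D : ℂ} (hc : c ≠ 0)
    (h1 : A ≠ 0 ∨ B ≠ 0) (h2 : G ≠ 0 ∨ D ≠ 0) (hfac : p = C c * (lf A B ^ 2 * lf G D)) :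
    A*D - B*G ≠ 0 := by
  intro h
  obtain ⟨ν, hν, hG, hD⟩ := pair_prop h1 h2 h
  apply hnc
  refine ⟨c*ν, A, B, mul_ne_zero hc hν, h1, ?_⟩
  rw [hfac, show lf G D = C ν * lf A B from by rw [hG, hD, lf_smul], map_mul]
  ring

lemma sq_of_disc_zero {a0 a1 a2 a3 : ℂ} (hne : cub a0 a1 a2 a3 ≠ 0)
    (hd : disc a0 a1 a2 a3 = 0) (hnc : ¬ IsPerfectCube (cub a0 a1 a2 a3)) :
    ∃ c A B G D : ℂ, c ≠ 0 ∧ (A ≠ 0 ∨ B ≠ 0) ∧ (G ≠ 0 ∨ D ≠ 0) ∧ A*D - B*G ≠ 0 ∧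
      cub a0 a1 a2 a3 = C c * (lf A B ^ 2 * lf G D) := by
  obtain ⟨α1, β1, α2, β2, α3, β3, h1, h2, h3, hfac⟩ := factor_P2 hne
  have hco := hfac
  rw [lf_mul] at hco
  obtain ⟨e0, e1, e2, e3⟩ := cub_inj hco
  have hsq : ((α1*β2 - α2*β1) * (α1*β3 - α3*β1) * (α2*β3 - α3*β2))^2 = 0 := by
    rw [← disc_prod, ← e0, ← e1, ← e2, ← e3]
    exact hd
  have hzero := pow_eq_zero_iff (n := 2) (by norm_num) |>.mp hsq
  rcases mul_eq_zero.mp hzero with hz | hz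
  · rcases mul_eq_zero.mp hz with hz' | hz'
    · -- ℓ1 ∝ ℓ2
      obtain ⟨μ, hμ, hγ, hδ⟩ := pair_prop h1 h2 (by linear_combination hz')
      have hfac' : cub a0 a1 a2 a3 = C μ * (lf α1 β1 ^ 2 * lf α3 β3) := by
        rw [hfac, show lf α2 β2 = C μ * lf α1 β1 from by rw [hγ, hδ, lf_smul]]
        ring
      exact ⟨μ, α1, β1, α3, β3, hμ, h1, h3, finish_case hnc hμ h1 h3 hfac', hfac'⟩
    · -- ℓ1 ∝ ℓ3
      obtain ⟨μ, hμ, hγ, hδ⟩ := pair_prop h1 h3 (by linear_combination hz')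
      have hfac' : cub a0 a1 a2 a3 = C μ * (lf α1 β1 ^ 2 * lf α2 β2) := by
        rw [hfac, show lf α3 β3 = C μ * lf α1 β1 from by rw [hγ, hδ, lf_smul]]
        ring
      exact ⟨μ, α1, β1, α2, β2, hμ, h1, h2, finish_case hnc hμ h1 h2 hfac', hfac'⟩
  · -- ℓ2 ∝ ℓ3
    obtain ⟨μ, hμ, hγ, hδ⟩ := pair_prop h2 h3 (by linear_combination hz)
    have hfac' : cub a0 a1 a2 a3 = C μ * (lf α2 β2 ^ 2 * lf α1 β1) := by
      rw [hfac, show lf α3 β3 = C μ * lf α2 β2 from by rw [hγ, hδ, lf_smul]]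
      ring
    exact ⟨μ, α2, β2, α1, β1, hμ, h2, h1, finish_case hnc hμ h2 h1 hfac', hfac'⟩

lemma cf_smul (i j : ℕ) (c : ℂ) (p : P2) : cf i j (c • p) = c * cf i j p := by
  simp [cf, coeff_smul]

lemma omega_span {x y : P2} (h : omegaForm x y = 0) {p q : P2}
    (hp : p ∈ Submodule.span ℂ {x, y}) (hq : q ∈ Submodule.span ℂ {x, y}) :
    omegaForm p q = 0 := by
  obtain ⟨a, b, rfl⟩ := Submodule.mem_span_pair.mp hp
  obtain ⟨c, d, rfl⟩ := Submodule.mem_span_pair.mp hq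
  simp only [omegaForm, cf_add, cf_smul] at h ⊢
  linear_combination (a*d - b*c) * h

lemma subst_mem_Vcubic {p : P2} (hp : p ∈ Vcubic) (g : SL2) : subst g p ∈ Vcubic := by
  rw [rep_of_mem_Vcubic hp, subst_cub]
  exact cub_mem_Vcubic _ _ _ _


lemma isLagrangian_mapAct {W : Submodule ℂ P2} (h : IsLagrangian W) (g : SL2) :
    IsLagrangian (mapAct g W) := by
  refine ⟨?_, ?_, ?_⟩
  · rintro p hp
    obtain ⟨q, hq, rfl⟩ := mem_mapAct.mp hp
    exact subst_mem_Vcubic (h.1 hq) g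
  · rw [finrank_mapAct]; exact h.2.1
  · intro p hp q hq
    obtain ⟨p₀, hp₀, rfl⟩ := mem_mapAct.mp hp
    obtain ⟨q₀, hq₀, rfl⟩ := mem_mapAct.mp hq
    have e1 := rep_of_mem_Vcubic (h.1 hp₀)
    have e2 := rep_of_mem_Vcubic (h.1 hq₀)
    calc omegaForm (subst g p₀) (subst g q₀) = omegaForm p₀ q₀ := by
          conv_lhs => rw [e1, e2]
          rw [omega_subst, ← e1, ← e2]
      _ = 0 := h.2.2 p₀ hp₀ q₀ hq₀

lemma subst_lf (g : SL2) (a b : ℂ) :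
    subst g (lf a b) = lf (a*g.1 1 1 - b*g.1 0 1) (b*g.1 0 0 - a*g.1 1 0) := by
  unfold lf
  simp only [map_sub, map_mul, subst_C, subst_Xv, subst_Yv]
  ring

lemma isPerfectCube_subst {p : P2} (g : SL2) (h : IsPerfectCube p) :
    IsPerfectCube (subst g p) := by
  obtain ⟨c, a, b, hc, hab, rfl⟩ := h
  refine ⟨c, a*g.1 1 1 - b*g.1 0 1, b*g.1 0 0 - a*g.1 1 0, hc, ?_, ?_⟩
  · by_contra hcon
    push_neg at hcon
    obtain ⟨hA, hB⟩ := hcon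
    have hdet := det_entries g
    have ha : a = 0 := by
      linear_combination g.1 0 0 * hA + g.1 0 1 * hB - a * hdet + a
    have hb : b = 0 := by
      linear_combination g.1 1 0 * hA + g.1 1 1 * hB - b * hdet + b
    rcases hab with h' | h' <;> [exact h' ha; exact h' hb]
  · rw [map_mul, map_pow, subst_C, subst_lf]

def mk2 (a b c d : ℂ) : Matrix (Fin 2) (Fin 2) ℂ := Matrix.of ![![a, b], ![c, d]]

lemma mk2_00 (a b c d : ℂ) : mk2 a b c d 0 0 = a := rfl
lemma mk2_01 (a b c d : ℂ) : mk2 a b c d 0 1 = b := rfl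
lemma mk2_10 (a b c d : ℂ) : mk2 a b c d 1 0 = c := rfl
lemma mk2_11 (a b c d : ℂ) : mk2 a b c d 1 1 = d := rfl

def sl (a b c d : ℂ) (h : a*d - b*c = 1) : SL2 :=
  ⟨mk2 a b c d, by rw [Matrix.det_fin_two, mk2_00, mk2_01, mk2_10, mk2_11]; linear_combination h⟩

lemma subst_sl_Xv (a b c d : ℂ) (h : a*d - b*c = 1) :
    subst (sl a b c d h) Xv = C a * Xv + C b * Yv := by
  rw [subst_Xv]; rfl

lemma subst_sl_Yv (a b c d : ℂ) (h : a*d - b*c = 1) :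
    subst (sl a b c d h) Yv = C c * Xv + C d * Yv := by
  rw [subst_Yv]; rfl

lemma exists_g_lf {a b : ℂ} (hab : a ≠ 0 ∨ b ≠ 0) :
    ∃ g : SL2, subst g Xv = lf a b := by
  by_cases ha : a = 0
  · have hb : b ≠ 0 := by tauto
    refine ⟨sl b (-a) 0 (1/b) (by field_simp; ring), ?_⟩
    rw [subst_sl_Xv, lf, map_neg]
    ring
  · refine ⟨sl b (-a) (1/a) 0 (by field_simp; ring), ?_⟩
    rw [subst_sl_Xv, lf, map_neg]
    ring

lemma exists_g_pair {α β γ δ : ℂ} (h : α*δ - β*γ ≠ 0) :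
    ∃ g : SL2, subst g Xv = lf α β ∧ subst g Yv = C (1/(α*δ - β*γ)) * lf γ δ := by
  refine ⟨sl β (-α) (δ/(α*δ - β*γ)) (-γ/(α*δ - β*γ)) (by field_simp; ring), ?_, ?_⟩
  · rw [subst_sl_Xv, lf, map_neg]; ring
  · rw [subst_sl_Yv, lf, mul_sub, ← mul_assoc, ← mul_assoc, ← map_mul, ← map_mul]
    rw [show (1:ℂ)/(α*δ - β*γ)*δ = δ/(α*δ - β*γ) by ring,
      show (1:ℂ)/(α*δ - β*γ)*γ = γ/(α*δ - β*γ) by ring,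
      show (-γ/(α*δ - β*γ) : ℂ) = -(γ/(α*δ - β*γ)) by ring, map_neg]
    ring

-- chunk 10: pencil has an element with vanishing discriminant
lemma exists_disc_zero (a0 a1 a2 a3 b0 b1 b2 b3 : ℂ) (hb : disc b0 b1 b2 b3 ≠ 0) :
    ∃ t : ℂ, disc (a0 + t*b0) (a1 + t*b1) (a2 + t*b2) (a3 + t*b3) = 0 := by
  set c0 : ℂ := disc a0 a1 a2 a3 with hc0
  set c1 : ℂ := -54*a0*a0*a3*b3 + 18*a0*a1*a2*b3 + 18*a0*a1*a3*b2 + (-12)*a0*a2*a2*b2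
    + 18*a0*a2*a3*b1 + (-54)*a0*a3*a3*b0 + (-4)*a1*a1*a1*b3 + 2*a1*a1*a2*b2
    + (-12)*a1*a1*a3*b1 + 2*a1*a2*a2*b1 + 18*a1*a2*a3*b0 + (-4)*a2*a2*a2*b0 with hc1
  set c2 : ℂ := -27*a0*a0*b3*b3 + 18*a0*a1*b2*b3 + 18*a0*a2*b1*b3 + (-12)*a0*a2*b2*b2
    + (-108)*a0*a3*b0*b3 + 18*a0*a3*b1*b2 + (-12)*a1*a1*b1*b3 + a1*a1*b2*b2
    + 18*a1*a2*b0*b3 + 4*a1*a2*b1*b2 + 18*a1*a3*b0*b2 + (-12)*a1*a3*b1*b1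
    + (-12)*a2*a2*b0*b2 + a2*a2*b1*b1 + 18*a2*a3*b0*b1 + (-27)*a3*a3*b0*b0 with hc2
  set c3 : ℂ := -54*a0*b0*b3*b3 + 18*a0*b1*b2*b3 + (-4)*a0*b2*b2*b2 + 18*a1*b0*b2*b3
    + (-12)*a1*b1*b1*b3 + 2*a1*b1*b2*b2 + 18*a2*b0*b1*b3 + (-12)*a2*b0*b2*b2
    + 2*a2*b1*b1*b2 + (-54)*a3*b0*b0*b3 + 18*a3*b0*b1*b2 + (-4)*a3*b1*b1*b1 with hc3
  set c4 : ℂ := disc b0 b1 b2 b3 with hc4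
  set f : Polynomial ℂ := Polynomial.C c0 + Polynomial.C c1 * Polynomial.X
    + Polynomial.C c2 * Polynomial.X^2 + Polynomial.C c3 * Polynomial.X^3
    + Polynomial.C c4 * Polynomial.X^4 with hf
  have hdeg : f.degree = 4 := by
    rw [hf]
    compute_degree!
  obtain ⟨z, hz⟩ := IsAlgClosed.exists_root f (by rw [hdeg]; norm_num)
  have heval : c0 + c1*z + c2*z^2 + c3*z^3 + c4*z^4 = 0 := by
    have := hz
    simp only [hf, Polynomial.IsRoot, Polynomial.eval_add, Polynomial.eval_mul,
      Polynomial.eval_pow, Polynomial.eval_C, Polynomial.eval_X] at this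
    linear_combination this
  refine ⟨z, ?_⟩
  rw [hc0] at heval
  rw [hc1] at heval
  rw [hc2] at heval
  rw [hc3] at heval
  rw [hc4] at heval
  unfold disc at heval ⊢
  linear_combination heval

-- chunk 11: the three model Lagrangians and invariants

lemma X3_cub : Xv^3 = cub 1 0 0 0 := by unfold cub; simp
lemma X2Y_cub : Xv^2*Yv = cub 0 1 0 0 := by unfold cub; simp
lemma XY2_cub : Xv*Yv^2 = cub 0 0 1 0 := by unfold cub; simp
lemma Y3_cub : Yv^3 = cub 0 0 0 1 := by unfold cub; simp
lemma X3Y3_cub : Xv^3 + Yv^3 = cub 1 0 0 1 := by unfold cub; simp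

lemma cub_pair_indep {a0 a1 a2 a3 b0 b1 b2 b3 : ℂ}
    (h : ∀ s t : ℂ, s*a0 + t*b0 = 0 → s*a1 + t*b1 = 0 → s*a2 + t*b2 = 0 →
      s*a3 + t*b3 = 0 → s = 0 ∧ t = 0) :
    LinearIndependent ℂ ![cub a0 a1 a2 a3, cub b0 b1 b2 b3] := by
  rw [LinearIndependent.pair_iff]
  intro s t hst
  rw [cub_smul, cub_smul, cub_add] at hst
  have h4 := cub_inj (hst.trans cub_zero.symm)
  exact h s t h4.1 h4.2.1 h4.2.2.1 h4.2.2.2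

lemma isLagrangian_of_pair {x y : P2} (hx : x ∈ Vcubic) (hy : y ∈ Vcubic)
    (hind : LinearIndependent ℂ ![x, y]) (hω : omegaForm x y = 0) :
    IsLagrangian (Submodule.span ℂ {x, y}) := by
  refine ⟨?_, finrank_span_pair' hind, fun p hp q hq => omega_span hω hp hq⟩
  rw [Submodule.span_le]
  rintro z (rfl | rfl) <;> assumption

lemma isLagrangian_L₁ : IsLagrangian L₁ := by
  rw [L₁, X3_cub, X2Y_cub]
  refine isLagrangian_of_pair (cub_mem_Vcubic _ _ _ _) (cub_mem_Vcubic _ _ _ _) ?_ ?_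
  · exact cub_pair_indep fun s t e0 e1 e2 e3 =>
      ⟨by linear_combination e0, by linear_combination e1⟩
  · rw [omega_cub]; ring

lemma isLagrangian_L₂ : IsLagrangian L₂ := by
  rw [L₂, X3_cub, XY2_cub]
  refine isLagrangian_of_pair (cub_mem_Vcubic _ _ _ _) (cub_mem_Vcubic _ _ _ _) ?_ ?_
  · exact cub_pair_indep fun s t e0 e1 e2 e3 =>
      ⟨by linear_combination e0, by linear_combination e2⟩
  · rw [omega_cub]; ring

lemma isLagrangian_L₃ : IsLagrangian L₃ := by
  rw [L₃, X2Y_cub, X3Y3_cub]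
  refine isLagrangian_of_pair (cub_mem_Vcubic _ _ _ _) (cub_mem_Vcubic _ _ _ _) ?_ ?_
  · exact cub_pair_indep fun s t e0 e1 e2 e3 =>
      ⟨by linear_combination e1, by linear_combination e0⟩
  · rw [omega_cub]; ring

lemma X3_isCube : IsPerfectCube (Xv^3) := by
  refine ⟨1, 0, 1, one_ne_zero, Or.inr one_ne_zero, ?_⟩
  unfold lf
  simp

lemma no_cube_L₃ : ∀ p ∈ L₃, ¬ IsPerfectCube p := by
  intro p hp hcube
  rw [L₃, X2Y_cub, X3Y3_cub] at hp
  obtain ⟨s, t, rfl⟩ := Submodule.mem_span_pair.mp hp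
  rw [cub_smul, cub_smul, cub_add] at hcube
  obtain ⟨c, a, b, hc, hab, hfac⟩ := hcube
  rw [cube_coords] at hfac
  obtain ⟨e0, e1, e2, e3⟩ := cub_inj hfac
  have h3 : b*a^2 = 0 := by
    have h' : c*(b*a^2) = 0 := by linear_combination (-1/3 : ℂ)*e2
    exact (mul_eq_zero.mp h').resolve_left hc
  rcases mul_eq_zero.mp h3 with hb | ha2
  · have ht : t = 0 := by
      rw [hb] at e0
      linear_combination e0
    have h4 : c*a^3 = 0 := by linear_combination e3 - ht
    have ha : a = 0 :=
      pow_eq_zero_iff (n := 3) (by norm_num) |>.mp ((mul_eq_zero.mp h4).resolve_left hc)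
    rcases hab with h' | h' <;> [exact h' ha; exact h' hb]
  · have ha : a = 0 := pow_eq_zero_iff (n := 2) (by norm_num) |>.mp ha2
    have ht : t = 0 := by
      rw [ha] at e3
      linear_combination e3
    have h4 : c*b^3 = 0 := by
      rw [ht] at e0
      linear_combination -e0
    have hb : b = 0 :=
      pow_eq_zero_iff (n := 3) (by norm_num) |>.mp ((mul_eq_zero.mp h4).resolve_left hc)
    rcases hab with h' | h' <;> [exact h' ha; exact h' hb]

def dscP (p : P2) : ℂ := disc (cf 3 0 p) (cf 2 1 p) (cf 1 2 p) (cf 0 3 p)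

lemma dscP_cub (a0 a1 a2 a3 : ℂ) : dscP (cub a0 a1 a2 a3) = disc a0 a1 a2 a3 := by
  rw [dscP, cf30, cf21, cf12, cf03]

lemma dscP_subst (g : SL2) (a0 a1 a2 a3 : ℂ) :
    dscP (subst g (cub a0 a1 a2 a3)) = disc a0 a1 a2 a3 := by
  rw [subst_cub, dscP_cub, disc_subst]

-- chunk 12: orbit invariants and disjointness
lemma cub_eq_zero_iff {a0 a1 a2 a3 : ℂ} :
    cub a0 a1 a2 a3 = 0 ↔ (a0 = 0 ∧ a1 = 0 ∧ a2 = 0 ∧ a3 = 0) := by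
  constructor
  · intro h
    exact cub_inj (h.trans cub_zero.symm)
  · rintro ⟨rfl, rfl, rfl, rfl⟩
    exact cub_zero

lemma orbit_has_cube {W L : Submodule ℂ P2} (hX3 : Xv^3 ∈ L) (hW : W ∈ slOrbit L) :
    ∃ p ∈ W, IsPerfectCube p := by
  obtain ⟨g, rfl⟩ := hW
  exact ⟨subst g (Xv^3), mem_mapAct.mpr ⟨_, hX3, rfl⟩, isPerfectCube_subst g X3_isCube⟩

lemma X3_mem_L₁ : Xv^3 ∈ L₁ := Submodule.subset_span (Set.mem_insert _ _)
lemma X3_mem_L₂ : Xv^3 ∈ L₂ := Submodule.subset_span (Set.mem_insert _ _)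

lemma orbit3_no_cube {W : Submodule ℂ P2} (hW : W ∈ slOrbit L₃) :
    ∀ p ∈ W, ¬IsPerfectCube p := by
  obtain ⟨g, rfl⟩ := hW
  intro p hp hcube
  obtain ⟨q, hq, rfl⟩ := mem_mapAct.mp hp
  have h := isPerfectCube_subst g⁻¹ hcube
  rw [subst_cancel] at h
  exact no_cube_L₃ q hq h

lemma orbit1_disc_zero {W : Submodule ℂ P2} (hW : W ∈ slOrbit L₁) :
    ∀ p ∈ W, dscP p = 0 := by
  obtain ⟨g, rfl⟩ := hW
  intro p hp
  obtain ⟨q, hq, rfl⟩ := mem_mapAct.mp hp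
  rw [L₁, X3_cub, X2Y_cub] at hq
  obtain ⟨s, t, rfl⟩ := Submodule.mem_span_pair.mp hq
  rw [cub_smul, cub_smul, cub_add, dscP_subst]
  unfold disc; ring

lemma orbit2_disc_ne {W : Submodule ℂ P2} (hW : W ∈ slOrbit L₂) :
    ∃ p ∈ W, dscP p ≠ 0 := by
  obtain ⟨g, rfl⟩ := hW
  have hm : cub 1 0 1 0 ∈ L₂ := by
    rw [L₂, X3_cub, XY2_cub]
    refine Submodule.mem_span_pair.mpr ⟨1, 1, ?_⟩
    rw [cub_smul, cub_smul, cub_add]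
    norm_num
  refine ⟨subst g (cub 1 0 1 0), mem_mapAct.mpr ⟨_, hm, rfl⟩, ?_⟩
  rw [dscP_subst]
  unfold disc
  norm_num

lemma disj12 {W : Submodule ℂ P2} (h1 : W ∈ slOrbit L₁) : W ∉ slOrbit L₂ := by
  intro h2
  obtain ⟨p, hp, hd⟩ := orbit2_disc_ne h2
  exact hd (orbit1_disc_zero h1 p hp)

lemma disj13 {W : Submodule ℂ P2} (h1 : W ∈ slOrbit L₁) : W ∉ slOrbit L₃ := by
  intro h3
  obtain ⟨p, hp, hc⟩ := orbit_has_cube X3_mem_L₁ h1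
  exact orbit3_no_cube h3 p hp hc

lemma disj23 {W : Submodule ℂ P2} (h2 : W ∈ slOrbit L₂) : W ∉ slOrbit L₃ := by
  intro h3
  obtain ⟨p, hp, hc⟩ := orbit_has_cube X3_mem_L₂ h2
  exact orbit3_no_cube h3 p hp hc

lemma span_pair_smul_right {d : ℂ} (hd : d ≠ 0) (x y : P2) :
    Submodule.span ℂ {x, d • y} = Submodule.span ℂ {x, y} := by
  have h := span_pair_shift (x := x) (y := y) 0 d hd
  simpa using h

lemma span_pair_smul_left {c : ℂ} (hc : c ≠ 0) (x y : P2) :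
    Submodule.span ℂ {c • x, y} = Submodule.span ℂ {x, y} := by
  rw [Set.pair_comm, span_pair_smul_right hc, Set.pair_comm]

lemma exists_ne_zero_mem {W : Submodule ℂ P2} (h2 : Module.finrank ℂ W = 2) :
    ∃ x ∈ W, x ≠ 0 := by
  by_contra hcon
  push_neg at hcon
  have hbot : W = ⊥ := by
    rw [eq_bot_iff]
    intro x hx
    simp [hcon x hx]
  rw [hbot, finrank_bot] at h2
  omega

-- chunk 13: case A
lemma cub_sub (a0 a1 a2 a3 b0 b1 b2 b3 : ℂ) :
    cub a0 a1 a2 a3 - cub b0 b1 b2 b3 = cub (a0-b0) (a1-b1) (a2-b2) (a3-b3) := by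
  unfold cub
  simp only [map_sub]
  ring

lemma X3_ne_zero : (Xv^3 : P2) ≠ 0 := by
  rw [X3_cub]
  intro h
  exact one_ne_zero (cub_eq_zero_iff.mp h).1

lemma X2Y_ne_zero : (Xv^2*Yv : P2) ≠ 0 := by
  rw [X2Y_cub]
  intro h
  exact one_ne_zero (cub_eq_zero_iff.mp h).2.1

lemma caseA {W : Submodule ℂ P2} (hL : IsLagrangian W)
    (hcube : ∃ p ∈ W, IsPerfectCube p) : W ∈ slOrbit L₁ ∨ W ∈ slOrbit L₂ := by
  obtain ⟨p, hpW, c, a, b, hc, hab, rfl⟩ := hcube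
  obtain ⟨g, hg⟩ := exists_g_lf hab
  set W' := mapAct g⁻¹ W with hW'def
  have hL' : IsLagrangian W' := isLagrangian_mapAct hL g⁻¹
  have hback : W = mapAct g W' := (mapAct_cancel g W).symm
  have hX3W' : Xv^3 ∈ W' := by
    have hmem : subst g⁻¹ (C c * lf a b ^ 3) ∈ W' := mem_mapAct.mpr ⟨_, hpW, rfl⟩
    have h1 : C c * lf a b ^ 3 = subst g (C c * Xv^3) := by
      rw [map_mul, map_pow, subst_C, hg]
    rw [h1, subst_cancel] at hmem
    have h2 : (Xv^3 : P2) = c⁻¹ • (C c * Xv^3) := by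
      rw [smul_eq_C_mul, ← mul_assoc, ← map_mul, inv_mul_cancel₀ hc, map_one, one_mul]
    rw [h2]
    exact Submodule.smul_mem _ _ hmem
  obtain ⟨y, hyW', hynot⟩ := exists_compl hL'.2.1 hX3W' X3_ne_zero
  obtain ⟨b0, b1, b2, b3, rfl⟩ : ∃ b0 b1 b2 b3, y = cub b0 b1 b2 b3 :=
    ⟨_, _, _, _, rep_of_mem_Vcubic (hL'.1 hyW')⟩
  have hy2 : cub 0 b1 b2 b3 ∈ W' := by
    have hs := Submodule.sub_mem W' hyW' (Submodule.smul_mem W' b0 hX3W')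
    have he : cub b0 b1 b2 b3 - b0 • Xv^3 = cub 0 b1 b2 b3 := by
      rw [X3_cub, cub_smul, cub_sub]
      exact cub_congr (by ring) (by ring) (by ring) (by ring)
    rwa [he] at hs
  have hω := hL'.2.2 _ hX3W' _ hy2
  rw [X3_cub, omega_cub] at hω
  have hb3 : b3 = 0 := by linear_combination hω
  subst hb3
  have hynot' : cub 0 b1 b2 0 ∉ Submodule.span ℂ {Xv^3} := by
    intro hmem
    apply hynot
    have he : cub b0 b1 b2 0 = b0 • Xv^3 + cub 0 b1 b2 0 := by
      rw [X3_cub, cub_smul, cub_add]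
      exact cub_congr (by ring) (by ring) (by ring) (by ring)
    rw [he]
    exact Submodule.add_mem _
      (Submodule.smul_mem _ _ (Submodule.mem_span_singleton_self _)) hmem
  have hspan : W' = Submodule.span ℂ {Xv^3, cub 0 b1 b2 0} :=
    span_eq_of_two hL'.2.1 hX3W' hy2 X3_ne_zero hynot'
  by_cases hb2 : b2 = 0
  · subst hb2
    have hb1 : b1 ≠ 0 := by
      rintro rfl
      exact hynot' (by rw [cub_zero]; exact Submodule.zero_mem _)
    left
    refine ⟨g, ?_⟩
    rw [hback]
    congr 1
    rw [hspan, L₁]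
    have he : cub 0 b1 0 0 = b1 • (Xv^2*Yv) := by
      rw [X2Y_cub, cub_smul]
      exact cub_congr (by ring) (by ring) (by ring) (by ring)
    rw [he, span_pair_smul_right hb1]
  · right
    set s : ℂ := b1/(2*b2) with hs
    have hdet1 : (1:ℂ)*1 - 0*s = 1 := by ring
    set h : SL2 := sl 1 0 s 1 hdet1 with hh
    have hX3fix : subst h (Xv^3) = Xv^3 := by
      rw [map_pow, hh, subst_sl_Xv]
      simp
    have hgen : subst h (Xv*Yv^2) = cub (s^2) (2*s) 1 0 := by
      rw [map_mul, map_pow, hh, subst_sl_Xv, subst_sl_Yv]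
      unfold cub
      simp only [map_one, map_zero, map_mul, map_pow, map_ofNat, one_mul, zero_mul,
        add_zero, zero_add, mul_one, mul_zero]
      ring
    have hmap : mapAct h L₂ = Submodule.span ℂ {Xv^3, cub (s^2) (2*s) 1 0} := by
      rw [L₂, mapAct_span_pair, hX3fix, hgen]
    have he : cub (s^2) (2*s) 1 0 = s^2 • Xv^3 + (1/b2) • cub 0 b1 b2 0 := by
      rw [X3_cub, cub_smul, cub_smul, cub_add]
      refine cub_congr (by ring) ?_ (by field_simp; ring) (by ring)
      rw [hs]
      field_simp
      ring
    have hmap2 : mapAct h L₂ = W' := by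
      rw [hmap, hspan, he, span_pair_shift _ _ (by simpa using hb2)]
    refine ⟨h * g, ?_⟩
    rw [hback, ← hmap2, mapAct_mapAct]

-- chunk 14: case B
lemma sl_00 (a b c d : ℂ) (h : a*d - b*c = 1) : (sl a b c d h).1 0 0 = a := rfl
lemma sl_01 (a b c d : ℂ) (h : a*d - b*c = 1) : (sl a b c d h).1 0 1 = b := rfl
lemma sl_10 (a b c d : ℂ) (h : a*d - b*c = 1) : (sl a b c d h).1 1 0 = c := rfl
lemma sl_11 (a b c d : ℂ) (h : a*d - b*c = 1) : (sl a b c d h).1 1 1 = d := rfl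

lemma caseB {W : Submodule ℂ P2} (hL : IsLagrangian W)
    (hnc : ∀ p ∈ W, ¬IsPerfectCube p) : W ∈ slOrbit L₃ := by
  obtain ⟨x, hxW, hx0⟩ := exists_ne_zero_mem hL.2.1
  obtain ⟨y, hyW, hynot⟩ := exists_compl hL.2.1 hxW hx0
  obtain ⟨a0, a1, a2, a3, rfl⟩ : ∃ a0 a1 a2 a3, x = cub a0 a1 a2 a3 :=
    ⟨_, _, _, _, rep_of_mem_Vcubic (hL.1 hxW)⟩
  obtain ⟨b0, b1, b2, b3, rfl⟩ : ∃ b0 b1 b2 b3, y = cub b0 b1 b2 b3 :=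
    ⟨_, _, _, _, rep_of_mem_Vcubic (hL.1 hyW)⟩
  have hr : ∃ r0 r1 r2 r3 : ℂ, cub r0 r1 r2 r3 ∈ W ∧ cub r0 r1 r2 r3 ≠ 0 ∧
      disc r0 r1 r2 r3 = 0 := by
    by_cases hdb : disc b0 b1 b2 b3 = 0
    · exact ⟨b0, b1, b2, b3, hyW, fun h => hynot (h ▸ Submodule.zero_mem _), hdb⟩
    · obtain ⟨t, ht⟩ := exists_disc_zero a0 a1 a2 a3 b0 b1 b2 b3 hdb
      refine ⟨a0+t*b0, a1+t*b1, a2+t*b2, a3+t*b3, ?_, ?_, ht⟩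
      · have he : cub (a0+t*b0) (a1+t*b1) (a2+t*b2) (a3+t*b3)
            = cub a0 a1 a2 a3 + t • cub b0 b1 b2 b3 := by
          rw [cub_smul, cub_add]
        rw [he]
        exact Submodule.add_mem _ hxW (Submodule.smul_mem _ _ hyW)
      · intro h0
        obtain ⟨e0, e1, e2, e3⟩ := cub_eq_zero_iff.mp h0
        by_cases ht0 : t = 0
        · exact hx0 (cub_eq_zero_iff.mpr ⟨by linear_combination e0 - b0*ht0,
            by linear_combination e1 - b1*ht0, by linear_combination e2 - b2*ht0,
            by linear_combination e3 - b3*ht0⟩)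
        · apply hynot
          have he : cub b0 b1 b2 b3 = (-1/t) • cub a0 a1 a2 a3 := by
            rw [cub_smul]
            exact cub_congr (by field_simp; linear_combination e0)
              (by field_simp; linear_combination e1)
              (by field_simp; linear_combination e2)
              (by field_simp; linear_combination e3)
          rw [he]
          exact Submodule.smul_mem _ _ (Submodule.mem_span_singleton_self _)
  obtain ⟨r0, r1, r2, r3, hrW, hrne, hrd⟩ := hr
  obtain ⟨c, A, B, G, D, hcne, hAB, hGD, hdet, hfac⟩ := sq_of_disc_zero hrne hrd (hnc _ hrW)
  obtain ⟨g, hgX, hgY⟩ := exists_g_pair hdet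
  set W' := mapAct g⁻¹ W with hW'def
  have hL' : IsLagrangian W' := isLagrangian_mapAct hL g⁻¹
  have hback : W = mapAct g W' := (mapAct_cancel g W).symm
  have hnc' : ∀ p ∈ W', ¬IsPerfectCube p := by
    intro p hp hcube
    obtain ⟨q, hq, rfl⟩ := mem_mapAct.mp hp
    have h := isPerfectCube_subst g hcube
    rw [subst_cancel'] at h
    exact hnc q hq h
  have hCc : C (c⁻¹) * C c = (1 : P2) := by
    rw [← map_mul, inv_mul_cancel₀ hcne, map_one]
  have hkey : subst g (Xv^2*Yv) = (1/(A*D-B*G) * c⁻¹) • cub r0 r1 r2 r3 := by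
    rw [smul_eq_C_mul, hfac, map_mul, map_pow, hgX, hgY,
      show C (1/(A*D-B*G) * c⁻¹) = C (1/(A*D-B*G)) * C c⁻¹ from map_mul C _ _]
    linear_combination (-(C (1/(A*D-B*G)) * (lf A B^2 * lf G D)) : P2) * hCc
  have hX2Y : Xv^2*Yv ∈ W' := by
    have he : Xv^2*Yv = subst g⁻¹ ((1/(A*D-B*G) * c⁻¹) • cub r0 r1 r2 r3) := by
      rw [← hkey, subst_cancel]
    rw [he]
    exact mem_mapAct.mpr ⟨_, Submodule.smul_mem _ _ hrW, rfl⟩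
  obtain ⟨y', hy'W', hy'not⟩ := exists_compl hL'.2.1 hX2Y X2Y_ne_zero
  obtain ⟨u0, u1, u2, u3, rfl⟩ : ∃ u0 u1 u2 u3, y' = cub u0 u1 u2 u3 :=
    ⟨_, _, _, _, rep_of_mem_Vcubic (hL'.1 hy'W')⟩
  have hu : cub u0 0 u2 u3 ∈ W' := by
    have hs := Submodule.sub_mem W' hy'W' (Submodule.smul_mem W' u1 hX2Y)
    have he : cub u0 u1 u2 u3 - u1 • (Xv^2*Yv) = cub u0 0 u2 u3 := by
      rw [X2Y_cub, cub_smul, cub_sub]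
      exact cub_congr (by ring) (by ring) (by ring) (by ring)
    rwa [he] at hs
  have hω := hL'.2.2 _ hX2Y _ hu
  rw [X2Y_cub, omega_cub] at hω
  have hu2 : u2 = 0 := by linear_combination (-3 : ℂ) * hω
  subst hu2
  have hunot : cub u0 0 0 u3 ∉ Submodule.span ℂ {Xv^2*Yv} := by
    intro hmem
    apply hy'not
    have he : cub u0 u1 0 u3 = u1 • (Xv^2*Yv) + cub u0 0 0 u3 := by
      rw [X2Y_cub, cub_smul, cub_add]
      exact cub_congr (by ring) (by ring) (by ring) (by ring)
    rw [he]
    exact Submodule.add_mem _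
      (Submodule.smul_mem _ _ (Submodule.mem_span_singleton_self _)) hmem
  have hune : cub u0 0 0 u3 ≠ 0 := fun h => hunot (h ▸ Submodule.zero_mem _)
  have hu3 : u3 ≠ 0 := by
    intro h3
    subst h3
    have hu0 : u0 ≠ 0 := fun h0 => hune (cub_eq_zero_iff.mpr ⟨h0, rfl, rfl, rfl⟩)
    refine hnc' _ hu ⟨u0, 0, 1, hu0, Or.inr one_ne_zero, ?_⟩
    rw [cube_coords]
    exact cub_congr (by ring) (by ring) (by ring) (by ring)
  have hu0 : u0 ≠ 0 := by
    intro h0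
    subst h0
    refine hnc' _ hu ⟨u3, -1, 0, hu3, Or.inl (by norm_num), ?_⟩
    rw [cube_coords]
    exact cub_congr (by ring) (by ring) (by ring) (by ring)
  have hspan : W' = Submodule.span ℂ {Xv^2*Yv, cub u0 0 0 u3} :=
    span_eq_of_two hL'.2.1 hX2Y hu X2Y_ne_zero hunot
  obtain ⟨t, ht⟩ := IsAlgClosed.exists_pow_nat_eq (u0/u3) (n := 6) (by norm_num)
  have ht0 : t ≠ 0 := by
    intro h0
    rw [h0] at ht
    have : u0/u3 = 0 := by rw [← ht]; norm_num
    rw [div_eq_zero_iff] at this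
    rcases this with h | h <;> [exact hu0 h; exact hu3 h]
  have hdet6 : t*(1/t) - 0*0 = 1 := by field_simp; ring
  set h : SL2 := sl t 0 0 (1/t) hdet6 with hh
  have hgen1 : subst h (Xv^2*Yv) = t • (Xv^2*Yv) := by
    rw [X2Y_cub, hh, subst_cub, sl_00, sl_01, sl_10, sl_11, cub_smul]
    exact cub_congr (by ring) (by field_simp; ring) (by ring) (by ring)
  have hgen2 : subst h (Xv^3 + Yv^3) = cub (t^3) 0 0 ((1/t)^3) := by
    rw [X3Y3_cub, hh, subst_cub, sl_00, sl_01, sl_10, sl_11]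
    exact cub_congr (by ring) (by ring) (by ring) (by ring)
  have ht6 : u3 * t^6 = u0 := by
    field_simp at ht
    linear_combination ht
  have hurel : cub u0 0 0 u3 = (u3*t^3) • cub (t^3) 0 0 ((1/t)^3) := by
    rw [cub_smul]
    refine cub_congr (by linear_combination -ht6) (by ring) (by ring) (by field_simp)
  have hmap2 : mapAct h L₃ = W' := by
    rw [L₃, mapAct_span_pair, hgen1, hgen2, span_pair_smul_left ht0, hspan, hurel,
      span_pair_smul_right (mul_ne_zero hu3 (pow_ne_zero 3 ht0))]
  exact ⟨h * g, by rw [hback, ← hmap2, mapAct_mapAct]⟩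

/-- Every Lagrangian of `V` lies in the `SL(2,ℂ)`-orbit of exactly one of
`span{X³, X²Y}`, `span{X³, XY²}`, `span{X²Y, X³+Y³}`: the three orbits are pairwise
disjoint and their union is the set of all Lagrangians of `V`. -/
theorem statement5 :
    (∀ W : Submodule ℂ P2,
      IsLagrangian W ↔ (W ∈ slOrbit L₁ ∨ W ∈ slOrbit L₂ ∨ W ∈ slOrbit L₃)) ∧
    (∀ W : Submodule ℂ P2, W ∈ slOrbit L₁ → W ∉ slOrbit L₂) ∧
    (∀ W : Submodule ℂ P2, W ∈ slOrbit L₁ → W ∉ slOrbit L₃) ∧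
    (∀ W : Submodule ℂ P2, W ∈ slOrbit L₂ → W ∉ slOrbit L₃) := by
  refine ⟨?_, fun W h1 => disj12 h1, fun W h1 => disj13 h1, fun W h2 => disj23 h2⟩
  intro W
  constructor
  · intro hW
    by_cases hcube : ∃ p ∈ W, IsPerfectCube p
    · rcases caseA hW hcube with h | h
      · exact Or.inl h
      · exact Or.inr (Or.inl h)
    · push_neg at hcube
      exact Or.inr (Or.inr (caseB hW hcube))
  · rintro (⟨g, rfl⟩ | ⟨g, rfl⟩ | ⟨g, rfl⟩)
    · exact isLagrangian_mapAct isLagrangian_L₁ g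
    · exact isLagrangian_mapAct isLagrangian_L₂ g
    · exact isLagrangian_mapAct isLagrangian_L₃ g
end
end
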